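/- For a rational number ν with denominator r (i.e., ν = p/r in lowest terms), the power series A_ν(x,y) := ∑_{n≥0} ₂F₁(−ν−n, −n; −2n; x) C(2n,n) y^n lies in ℤ⟦y, xy/r²⟧; that is, writing A_ν(x,y) = ∑_{n≥0} ∑_{k=0}^n c_{n,k} x^{n−k} y^n, each coefficient c_{n,k} · r^{2(n−k)} is an integer. -/

import Mathlib

open Finset

/-- The coefficient `c_{n,k} = (−1)^{n−k} (n−ν)(n−1−ν)⋯(k+1−ν)/(n−k)! · C(n+k,k)`
of `x^{n−k} y^n` in `A_ν(x,y) = ∑_{n≥0} ₂F₁(−ν−n, −n; −2n; x) C(2n,n) y^n`. -/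
noncomputable def cCoeff (ν : ℝ) (n k : ℕ) : ℝ :=
  (-1) ^ (n - k) * (∏ i ∈ Finset.Icc (k + 1) n, ((i : ℝ) - ν)) / (n - k).factorial *
    ((n + k).choose k)

/-- The ascending Pochhammer polynomial over ℤ evaluates to a product of consecutive terms. -/
lemma ascPochhammer_int_eval_eq_prod (m : ℕ) (a : ℤ) :
    (ascPochhammer ℤ m).eval a = ∏ j ∈ Finset.range m, (a + j) := by
  induction m with
  | zero => simp
  | succ m ih =>
    rw [ascPochhammer_succ_eval, Finset.prod_range_succ, ih]

/-- `m!` divides a product of `m` consecutive integers. -/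
lemma factorial_dvd_prod_consecutive (m : ℕ) (a : ℤ) :
    (m.factorial : ℤ) ∣ ∏ j ∈ Finset.range m, (a + j) := by
  have h := Ring.factorial_nsmul_multichoose_eq_ascPochhammer a m
  rw [Polynomial.ascPochhammer_smeval_eq_eval, ascPochhammer_int_eval_eq_prod] at h
  exact ⟨Ring.multichoose a m, by rw [← h, nsmul_eq_mul]⟩

/-- The `q`-adic valuation of `m!` is at most `m`. -/
lemma factorization_factorial_le (q m : ℕ) : (m.factorial).factorization q ≤ m := by
  by_cases hq : q.Prime
  · haveI : Fact q.Prime := ⟨hq⟩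
    rw [Nat.factorization_def _ hq]
    have h := sub_one_mul_padicValNat_factorial (p := q) m
    have h2 : 2 ≤ q := hq.two_le
    calc padicValNat q m.factorial ≤ (q - 1) * padicValNat q m.factorial :=
          Nat.le_mul_of_pos_left _ (by omega)
      _ = m - (q.digits m).sum := h
      _ ≤ m := Nat.sub_le _ _
  · simp [Nat.factorization_eq_zero_of_not_prime _ hq]

/-- Key divisibility: `m! ∣ r^m · ∏_{j<m} (r(s+j) − p)` when `gcd(p,r)=1`. -/
lemma key_dvd (p : ℤ) (r : ℕ) (hr : 0 < r) (hpr : p.gcd r = 1) (m : ℕ) (s : ℤ) :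
    (m.factorial : ℤ) ∣ (r : ℤ) ^ m * ∏ j ∈ Finset.range m, ((r : ℤ) * (s + j) - p) := by
  set F := m.factorial with hF
  have hF0 : F ≠ 0 := Nat.factorial_ne_zero m
  set u := F.gcd (r ^ F) with hu
  have huF : u ∣ F := Nat.gcd_dvd_left _ _
  have hu0 : u ≠ 0 := (Nat.gcd_pos_of_pos_left _ (Nat.factorial_pos m)).ne'
  have hr0 : r ≠ 0 := hr.ne'
  have hrF0 : r ^ F ≠ 0 := pow_ne_zero _ hr0
  set v := F / u with hv
  have hv0 : v ≠ 0 := (Nat.div_pos (Nat.le_of_dvd (Nat.pos_of_ne_zero hF0) huF)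
    (Nat.pos_of_ne_zero hu0)).ne'
  have hFuv : F = u * v := (Nat.mul_div_cancel' huF).symm
  have hufact : u.factorization = F.factorization ⊓ (r ^ F).factorization :=
    Nat.factorization_gcd hF0 hrF0
  -- u divides r^m
  have hum : u ∣ r ^ m := by
    rw [← Nat.factorization_le_iff_dvd hu0 (pow_ne_zero _ hr0)]
    intro q
    simp only [hufact, Nat.factorization_pow, Finsupp.inf_apply, Finsupp.smul_apply,
      smul_eq_mul, Finsupp.coe_smul, Pi.smul_apply]
    rcases Nat.eq_zero_or_pos (r.factorization q) with h0 | h1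
    · simp [h0]
    · have : F.factorization q ≤ m := factorization_factorial_le q m
      calc min (F.factorization q) (F * r.factorization q) ≤ F.factorization q :=
            min_le_left _ _
        _ ≤ m := this
        _ ≤ m * r.factorization q := Nat.le_mul_of_pos_right _ h1
  -- v is coprime to r
  have hcop : Nat.Coprime r v := by
    by_contra h
    have h' : Nat.gcd r v ≠ 1 := h
    obtain ⟨q, hq, hqd⟩ := Nat.exists_prime_and_dvd h'
    have hqr : q ∣ r := hqd.trans (Nat.gcd_dvd_left _ _)
    have hqv : q ∣ v := hqd.trans (Nat.gcd_dvd_right _ _)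
    have hvfact : v.factorization = F.factorization - u.factorization := by
      rw [hv, Nat.factorization_div huF]
    have hrq : 1 ≤ r.factorization q := (Nat.Prime.factorization_pos_of_dvd hq hr0 hqr)
    have hFq : F.factorization q < F := Nat.factorization_lt q hF0
    have huq : u.factorization q = F.factorization q := by
      rw [hufact]
      simp only [Finsupp.inf_apply, Nat.factorization_pow, Finsupp.coe_smul, Pi.smul_apply,
        smul_eq_mul]
      exact min_eq_left (le_trans hFq.le (Nat.le_mul_of_pos_right _ hrq))
    have hvq : v.factorization q = 0 := by
      rw [hvfact]; simp [huq]
    have : 0 < v.factorization q := Nat.Prime.factorization_pos_of_dvd hq hv0 hqv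
    omega
  -- v divides the product
  haveI : NeZero v := ⟨hv0⟩
  have hvP : (v : ℤ) ∣ ∏ j ∈ Finset.range m, ((r : ℤ) * (s + j) - p) := by
    rw [← ZMod.intCast_zmod_eq_zero_iff_dvd]
    push_cast
    set ru : (ZMod v)ˣ := ZMod.unitOfCoprime r hcop with hru
    have hrucoe : ((ru : (ZMod v)ˣ) : ZMod v) = (r : ZMod v) := ZMod.coe_unitOfCoprime r hcop
    set w : ℤ := ((((ru⁻¹ : (ZMod v)ˣ) : ZMod v) * (p : ZMod v)).val : ℤ) with hw
    have hwcoe : ((w : ℤ) : ZMod v) = ((ru⁻¹ : (ZMod v)ˣ) : ZMod v) * (p : ZMod v) := by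
      rw [hw]
      push_cast
      exact ZMod.natCast_rightInverse _
    have hfac : ∀ j : ℕ, ((r : ZMod v) * ((s : ZMod v) + j) - (p : ZMod v))
        = (ru : ZMod v) * (((s : ZMod v) + j) - (w : ZMod v)) := by
      intro j
      rw [hwcoe, mul_sub, hrucoe]
      congr 1
      rw [← mul_assoc, ← hrucoe, ← Units.val_mul, mul_inv_cancel, Units.val_one, one_mul]
    calc (∏ j ∈ Finset.range m, ((r : ZMod v) * ((s : ZMod v) + j) - (p : ZMod v)))
        = ∏ j ∈ Finset.range m, ((ru : ZMod v) * (((s : ZMod v) + j) - (w : ZMod v))) := by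
          exact Finset.prod_congr rfl fun j _ => hfac j
      _ = (ru : ZMod v) ^ m * ∏ j ∈ Finset.range m, (((s : ZMod v) + j) - (w : ZMod v)) := by
          rw [Finset.prod_mul_distrib, Finset.prod_const, Finset.card_range]
      _ = 0 := by
          have hdvd : (F : ℤ) ∣ ∏ j ∈ Finset.range m, ((s - w) + j) :=
            factorial_dvd_prod_consecutive m (s - w)
          have hvF : (v : ℤ) ∣ (F : ℤ) := Int.natCast_dvd_natCast.mpr ⟨u, by rw [hFuv, Nat.mul_comm]⟩
          have : ((∏ j ∈ Finset.range m, ((s - w) + (j : ℤ)) : ℤ) : ZMod v) = 0 := by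
            rw [ZMod.intCast_zmod_eq_zero_iff_dvd]
            exact hvF.trans hdvd
          push_cast at this
          rw [show (∏ j ∈ Finset.range m, (((s : ZMod v) + j) - (w : ZMod v)))
              = ∏ j ∈ Finset.range m, (((s : ZMod v) - (w : ZMod v)) + j) by
            exact Finset.prod_congr rfl fun j _ => by ring]
          rw [this, mul_zero]
  -- assemble
  rw [hFuv]
  push_cast
  exact mul_dvd_mul (by exact_mod_cast Int.natCast_dvd_natCast.mpr hum) hvP

/-- **Integrality of the dihedral series:** if `ν = p/r` in lowest terms then
`A_ν(x,y) ∈ ℤ⟦y, xy/r²⟧`, i.e. `r^{2(n−k)} · c_{n,k} ∈ ℤ` for all `0 ≤ k ≤ n`. -/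
theorem stmt_5 (p : ℤ) (r : ℕ) (hr : 0 < r) (hpr : p.gcd r = 1) (ν : ℝ)
    (hν : ν = (p : ℝ) / r) :
    ∀ n k : ℕ, k ≤ n → ∃ z : ℤ, cCoeff ν n k * (r : ℝ) ^ (2 * (n - k)) = z := by
  intro n k hk
  set m := n - k with hm
  obtain ⟨z0, hz0⟩ := key_dvd p r hr hpr m ((k : ℤ) + 1)
  refine ⟨(-1) ^ m * z0 * ((n + k).choose k), ?_⟩
  have hr0 : (r : ℝ) ≠ 0 := Nat.cast_ne_zero.mpr hr.ne'
  have hfac0 : ((m.factorial : ℝ)) ≠ 0 := Nat.cast_ne_zero.mpr (Nat.factorial_ne_zero m)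
  have hcard : (Finset.Icc (k + 1) n).card = m := by rw [Nat.card_Icc]; omega
  have hprod : (∏ i ∈ Finset.Icc (k + 1) n, ((i : ℝ) - ν)) * (r : ℝ) ^ m
      = ((∏ j ∈ Finset.range m, ((r : ℤ) * (((k : ℤ) + 1) + j) - p) : ℤ) : ℝ) := by
    rw [show (r : ℝ) ^ m = ∏ _i ∈ Finset.Icc (k + 1) n, (r : ℝ) by
      rw [Finset.prod_const, hcard], ← Finset.prod_mul_distrib]
    have h1 : ∀ i ∈ Finset.Icc (k + 1) n, ((i : ℝ) - ν) * (r : ℝ)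
        = (r : ℝ) * (i : ℝ) - (p : ℝ) := by
      intro i _
      rw [hν]
      field_simp
    rw [Finset.prod_congr rfl h1, ← Finset.Ico_add_one_right_eq_Icc, Finset.prod_Ico_eq_prod_range]
    have h2 : n + 1 - (k + 1) = m := by omega
    rw [h2]
    push_cast
    exact Finset.prod_congr rfl fun j _ => by ring
  have hD : ((r : ℝ)) ^ m * ((∏ j ∈ Finset.range m,
      ((r : ℤ) * (((k : ℤ) + 1) + j) - p) : ℤ) : ℝ)
      = (m.factorial : ℝ) * (z0 : ℝ) := by exact_mod_cast congrArg (Int.cast : ℤ → ℝ) hz0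
  rw [cCoeff, ← hm]
  push_cast
  rw [two_mul, pow_add]
  field_simp
  linear_combination ((((n + k).choose k : ℕ) : ℝ) * (r : ℝ) ^ m) * hprod
    + ((((n + k).choose k : ℕ) : ℝ)) * hD
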